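/- For n ≥ 2 and a prime p, the affine group AGL(n, p) contains an element of order p^n if and only if (n, p) = (2, 2); moreover AGL(2,2) ≅ S_4. -/

import Mathlib

open Polynomial Finset

lemma geom_poly (p : ℕ) [Fact p.Prime] (k : ℕ) :
    (∑ i ∈ Finset.range (p ^ k), (1 + X : (ZMod p)[X]) ^ i) = X ^ (p ^ k - 1) := by
  haveI : CharP ((ZMod p)[X]) p :=
    charP_of_injective_ringHom (C_injective : Function.Injective (C : ZMod p →+* _)) p
  have h0 : 0 < p ^ k := pow_pos (Fact.out : p.Prime).pos k
  apply mul_left_cancel₀ (X_ne_zero : (X : (ZMod p)[X]) ≠ 0)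
  have h2 := geom_sum_mul (1 + X : (ZMod p)[X]) (p ^ k)
  rw [add_sub_cancel_left] at h2
  rw [mul_comm, h2, add_pow_char_pow, one_pow, add_sub_cancel_left, ← pow_succ']
  congr 1
  omega

lemma agl_key {p n : ℕ} (hp : p.Prime) (hn : 0 < n) (k : ℕ) (hk : n + 1 ≤ p ^ k)
    (g : (Fin n → ZMod p) ≃ᵃ[ZMod p] (Fin n → ZMod p))
    (hg : g ^ p ^ n = 1) : g ^ p ^ k = 1 := by
  haveI : Fact p.Prime := ⟨hp⟩
  haveI : Nonempty (Fin n) := ⟨⟨0, hn⟩⟩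
  haveI : Nontrivial (Fin n → ZMod p) := Function.nontrivial
  haveI : CharP (Module.End (ZMod p) (Fin n → ZMod p)) p :=
    charP_of_injective_ringHom (algebraMap (ZMod p) _).injective p
  set a : Module.End (ZMod p) (Fin n → ZMod p) := g.linear.toLinearMap with ha_def
  have happ : ∀ y, g y = a y + g 0 := by
    intro y
    have h := g.map_vadd (0 : Fin n → ZMod p) y
    simpa [vadd_eq_add, ha_def] using h
  have hpow : ∀ m x, (g ^ m) x = (a ^ m) x + (∑ i ∈ Finset.range m, a ^ i) (g 0) := by
    intro m
    induction m with
    | zero => intro x; simp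
    | succ m ih =>
      intro x
      have h1 : (g ^ (m + 1)) x = g ((g ^ m) x) := by
        rw [pow_succ', AffineEquiv.coe_mul, Function.comp_apply]
      rw [h1, ih, happ, map_add]
      have h2 : (a ^ (m + 1)) x = a ((a ^ m) x) := by rw [pow_succ']; rfl
      have h3 : (∑ i ∈ Finset.range (m + 1), a ^ i) (g 0)
          = a ((∑ i ∈ Finset.range m, a ^ i) (g 0)) + g 0 := by
        rw [geom_sum_succ, LinearMap.add_apply, Module.End.mul_apply, Module.End.one_apply]
      rw [h2, h3]
      abel
  have h0 : (∑ i ∈ Finset.range (p ^ n), a ^ i) (g 0) = 0 := by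
    have h := hpow (p ^ n) 0
    rw [hg] at h
    simpa using h.symm
  have ha : a ^ p ^ n = 1 := by
    apply LinearMap.ext
    intro x
    have h := hpow (p ^ n) x
    rw [hg, h0, add_zero] at h
    simpa using h.symm
  set N : Module.End (ZMod p) (Fin n → ZMod p) := a - 1 with hN_def
  have hNpn : N ^ p ^ n = 0 := by
    rw [hN_def, sub_pow_char_pow_of_commute _ _ (Commute.one_right a), ha, one_pow, sub_self]
  have hNn : N ^ n = 0 := by
    have hnil : IsNilpotent N := ⟨_, hNpn⟩
    have hc := hnil.charpoly_eq_X_pow_finrank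
    have h := N.aeval_self_charpoly
    rw [hc] at h
    simpa [Module.finrank_fintype_fun_eq_card] using h
  have haN : a = 1 + N := by rw [hN_def]; abel
  have hgeom : (∑ i ∈ Finset.range (p ^ k), a ^ i) = N ^ (p ^ k - 1) := by
    have h := congrArg (aeval N) (geom_poly p k)
    simpa [map_sum, haN] using h
  have hS : (∑ i ∈ Finset.range (p ^ k), a ^ i) = 0 := by
    rw [hgeom, show p ^ k - 1 = n + (p ^ k - 1 - n) from by omega, pow_add, hNn, zero_mul]
  have hak : a ^ p ^ k = 1 := by
    rw [haN, add_pow_char_pow_of_commute _ _ (Commute.one_left N), one_pow,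
      show p ^ k = n + (p ^ k - n) from by omega, pow_add, hNn, zero_mul, add_zero]
  apply AffineEquiv.toEquiv_injective
  apply Equiv.ext
  intro x
  have h := hpow (p ^ k) x
  rw [hS, hak] at h
  simpa using h


abbrev V2 : Type := Fin 2 → ZMod 2

/-- The linear functional `x ↦ c 1 * x 0 + c 0 * x 1`. -/
def lfun (c : V2) : V2 →ₗ[ZMod 2] ZMod 2 :=
  c 1 • LinearMap.proj 0 + c 0 • LinearMap.proj 1

/-- The linear involution `x ↦ x + (lfun c x) • c`. -/
def linv (c : V2) : V2 →ₗ[ZMod 2] V2 :=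
  LinearMap.id + (lfun c).smulRight c

lemma linv_invol (c : V2) : linv c ∘ₗ linv c = LinearMap.id := by
  apply LinearMap.ext
  intro x
  revert c x
  decide

def linvE (c : V2) : V2 ≃ₗ[ZMod 2] V2 :=
  LinearEquiv.ofLinear (linv c) (linv c) (linv_invol c) (linv_invol c)

/-- affine map `x ↦ c + linv c x`, which is the swap of `0` and `c` when `c ≠ 0`. -/
def sw0 (c : V2) : V2 ≃ᵃ[ZMod 2] V2 :=
  (linvE c).toAffineEquiv.trans (AffineEquiv.constVAdd (ZMod 2) V2 c)

/-- affine map realizing the swap of `a` and `b`. -/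
def swA (a b : V2) : V2 ≃ᵃ[ZMod 2] V2 :=
  ((AffineEquiv.constVAdd (ZMod 2) V2 a).symm.trans (sw0 (a + b))).trans
    (AffineEquiv.constVAdd (ZMod 2) V2 a)

lemma swA_apply : ∀ a b : V2, a ≠ b → ∀ x, swA a b x = Equiv.swap a b x := by
  decide

def aglPerm : (V2 ≃ᵃ[ZMod 2] V2) →* Equiv.Perm V2 where
  toFun := AffineEquiv.toEquiv
  map_one' := rfl
  map_mul' := fun _ _ => rfl

lemma aglPerm_surj : Function.Surjective aglPerm := by
  rw [← MonoidHom.range_eq_top]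
  rw [← top_le_iff, ← Equiv.Perm.closure_isSwap]
  rw [Subgroup.closure_le]
  rintro σ ⟨a, b, hab, rfl⟩
  exact ⟨swA a b, Equiv.ext (swA_apply a b hab)⟩

lemma aglPerm_inj : Function.Injective aglPerm := AffineEquiv.toEquiv_injective

noncomputable def aglS4 : (V2 ≃ᵃ[ZMod 2] V2) ≃* Equiv.Perm (Fin 4) := by
  refine (MulEquiv.ofBijective aglPerm ⟨aglPerm_inj, aglPerm_surj⟩).trans ?_
  have e : V2 ≃ Fin 4 := Fintype.equivFinOfCardEq (by decide)
  exact
    { toFun := fun σ => (e.symm.trans σ).trans e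
      invFun := fun σ => (e.trans σ).trans e.symm
      left_inv := fun σ => by ext x; simp
      right_inv := fun σ => by ext x; simp
      map_mul' := fun σ τ => by ext x; simp [Equiv.Perm.mul_apply] }

def g0 : V2 ≃ᵃ[ZMod 2] V2 :=
  (linvE ![1, 0]).toAffineEquiv.trans (AffineEquiv.constVAdd (ZMod 2) V2 ![0, 1])

lemma g0_pt : ∀ x, g0 (g0 (g0 (g0 x))) = x := by decide

lemma g0_sq_ne : g0 (g0 0) ≠ 0 := by decide

lemma orderOf_g0 : orderOf g0 = 4 := by
  haveI : Fact (Nat.Prime 2) := ⟨Nat.prime_two⟩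
  have hne : ¬ g0 ^ (2 : ℕ) ^ 1 = 1 := by
    intro h
    apply g0_sq_ne
    calc g0 (g0 0) = (g0 * g0) 0 := by rw [AffineEquiv.coe_mul]; rfl
      _ = (g0 ^ (2 : ℕ) ^ 1) 0 := by norm_num [pow_two]
      _ = 0 := by rw [h]; rfl
  have hone : g0 ^ (2 : ℕ) ^ 2 = 1 := by
    have hmul : g0 ^ (2 : ℕ) ^ 2 = ((g0 * g0) * g0) * g0 := by
      norm_num [pow_succ, pow_zero, one_mul]
    apply AffineEquiv.toEquiv_injective
    apply Equiv.ext
    intro x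
    rw [hmul]
    show ((((g0 * g0) * g0) * g0)) x = x
    simp only [AffineEquiv.coe_mul, Function.comp_apply]
    exact g0_pt x
  have := orderOf_eq_prime_pow hne hone
  norm_num at this
  exact this

lemma nat_ineq {n p : ℕ} (hn : 2 ≤ n) (hp : p.Prime) (h : ¬(n = 2 ∧ p = 2)) :
    n + 1 ≤ p ^ (n - 1) := by
  have hp2 : 2 ≤ p := hp.two_le
  rcases eq_or_lt_of_le hp2 with hp2' | hp3
  · have hn3 : 3 ≤ n := by
      rcases Nat.lt_or_ge n 3 with h' | h'
      · exact absurd ⟨by omega, hp2'.symm⟩ h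
      · exact h'
    have key : ∀ m, 2 ≤ m → m + 2 ≤ 2 ^ m := by
      intro m hm
      induction m with
      | zero => omega
      | succ k ih =>
        rcases Nat.lt_or_ge k 2 with hk | hk
        · have : k = 1 := by omega
          subst this
          norm_num
        · have := ih hk
          rw [pow_succ]
          omega
    have hkey := key (n - 1) (by omega)
    rw [← hp2']
    omega
  · have key : ∀ m, 1 ≤ m → m + 2 ≤ 3 ^ m := by
      intro m hm
      induction m with
      | zero => omega
      | succ k ih =>
        rcases Nat.lt_or_ge k 1 with hk | hk
        · have : k = 0 := by omega
          subst this
          norm_num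
        · have := ih hk
          rw [pow_succ]
          omega
    have hkey := key (n - 1) (by omega)
    have h3 : 3 ^ (n - 1) ≤ p ^ (n - 1) := Nat.pow_le_pow_left hp3 _
    omega

/-- `AGL(n, p)` contains an element of order `p^n` iff `(n, p) = (2, 2)`;
moreover `AGL(2, 2) ≅ S₄`. -/
theorem agl_orderOf_pow_iff (n p : ℕ) (hn : 2 ≤ n) (hp : p.Prime) :
    ((∃ g : (Fin n → ZMod p) ≃ᵃ[ZMod p] (Fin n → ZMod p), orderOf g = p ^ n) ↔
      (n = 2 ∧ p = 2)) ∧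
    Nonempty (((Fin 2 → ZMod 2) ≃ᵃ[ZMod 2] (Fin 2 → ZMod 2)) ≃* Equiv.Perm (Fin 4)) := by
  constructor
  · constructor
    · rintro ⟨g, hg⟩
      by_contra hne
      have hineq := nat_ineq hn hp hne
      have h1 : g ^ p ^ n = 1 := by rw [← hg]; exact pow_orderOf_eq_one g
      have h2 := agl_key hp (by omega) (n - 1) hineq g h1
      have h3 : orderOf g ∣ p ^ (n - 1) := orderOf_dvd_of_pow_eq_one h2
      rw [hg] at h3
      have h4 : p ^ n ≤ p ^ (n - 1) :=
        Nat.le_of_dvd (pow_pos hp.pos _) h3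
      have h5 : n ≤ n - 1 := (Nat.pow_le_pow_iff_right hp.one_lt).mp h4
      omega
    · rintro ⟨rfl, rfl⟩
      exact ⟨g0, by rw [orderOf_g0]; norm_num⟩
  · exact ⟨aglS4⟩
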